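/- Let (Ω, 𝒜, ℙ) be a probability space, let ι be an index type equipped with a filter 𝓕 ≠ ⊥ (modelling a net), and for each i ∈ ι let ξ_i : Ω → ℝ^d be a measurable map. Assume the net (ξ_i) is stochastically bounded: limsup_{𝓕} ℙ(‖ξ_i‖_∞ > a) → 0 as a → ∞. Let ν be a real-valued set function on the subsets of ℝ^d that is monotone with respect to inclusion. If liminf_{𝓕} ℙ(ξ_i ∈ ℝ^d \ K) ≥ ν(ℝ^d \ K) for every compact K ⊆ ℝ^d, then liminf_{𝓕} ℙ(ξ_i ∈ G) ≥ ν(G) for every open G ⊆ ℝ^d. (This is the upgrading step from complements of compact sets to open sets in the proof of the Extended Argmin-Theorem, where ν is the containment functional of the random closed set of limit minimizers.) -/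

import Mathlib

open MeasureTheory Filter

/-- Upgrading step from complements of compact sets to open sets: if a stochastically
bounded net of random vectors satisfies `liminf ℙ(ξ_i ∈ Kᶜ) ≥ ν(Kᶜ)` for all compact
`K`, where `ν` is a monotone set function, then `liminf ℙ(ξ_i ∈ G) ≥ ν(G)` for all
open sets `G`. -/
theorem liminf_prob_ge_of_cocompact_to_open
    {Ω : Type*} [MeasurableSpace Ω] (ℙ : Measure Ω) [IsProbabilityMeasure ℙ]
    {ι : Type*} (𝓕 : Filter ι) [𝓕.NeBot] (d : ℕ)
    (ξ : ι → Ω → (Fin d → ℝ)) (hmeas : ∀ i, Measurable (ξ i))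
    (hbdd : Tendsto (fun a : ℝ =>
        limsup (fun i => (ℙ {ω | a < ‖ξ i ω‖}).toReal) 𝓕) atTop (nhds 0))
    (ν : Set (Fin d → ℝ) → ℝ) (hν : ∀ E E' : Set (Fin d → ℝ), E ⊆ E' → ν E ≤ ν E')
    (hcocompact : ∀ K : Set (Fin d → ℝ), IsCompact K →
        ν Kᶜ ≤ liminf (fun i => (ℙ {ω | ξ i ω ∈ Kᶜ}).toReal) 𝓕) :
    ∀ G : Set (Fin d → ℝ), IsOpen G →
        ν G ≤ liminf (fun i => (ℙ {ω | ξ i ω ∈ G}).toReal) 𝓕 := by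
  intro G hG
  -- boundedness facts
  have bdd01 : ∀ (S : ι → Set Ω),
      IsBoundedUnder (· ≥ ·) 𝓕 (fun i => (ℙ (S i)).toReal) ∧
      IsBoundedUnder (· ≤ ·) 𝓕 (fun i => (ℙ (S i)).toReal) := by
    intro S
    constructor
    · exact isBoundedUnder_of ⟨0, fun i => ENNReal.toReal_nonneg⟩
    · refine isBoundedUnder_of ⟨1, fun i => ?_⟩
      have := prob_le_one (μ := ℙ) (s := S i)
      simpa using ENNReal.toReal_mono (by simp) this
  -- suffices: ν G ≤ L + ε for all ε > 0
  refine le_of_forall_pos_le_add ?_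
  intro ε hε
  obtain ⟨a, ha⟩ : ∃ a : ℝ,
      limsup (fun i => (ℙ {ω | a < ‖ξ i ω‖}).toReal) 𝓕 < ε := by
    exact (hbdd.eventually (gt_mem_nhds hε)).exists
  set K : Set (Fin d → ℝ) := Gᶜ ∩ Metric.closedBall 0 a with hK
  have hKcpt : IsCompact K := (isCompact_closedBall (0 : Fin d → ℝ) a).inter_left
    hG.isClosed_compl
  have hGK : G ⊆ Kᶜ := fun x hx hxK => hxK.1 hx
  have hKsub : Kᶜ ⊆ G ∪ (Metric.closedBall (0 : Fin d → ℝ) a)ᶜ := by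
    intro x hx
    rw [hK, Set.compl_inter, compl_compl] at hx
    exact hx
  -- pointwise bound
  have hpt : ∀ i, (ℙ {ω | ξ i ω ∈ Kᶜ}).toReal ≤
      (ℙ {ω | a < ‖ξ i ω‖}).toReal + (ℙ {ω | ξ i ω ∈ G}).toReal := by
    intro i
    have hsub : {ω | ξ i ω ∈ Kᶜ} ⊆ {ω | a < ‖ξ i ω‖} ∪ {ω | ξ i ω ∈ G} := by
      intro ω hω
      rcases hKsub hω with h | h
      · exact Or.inr h
      · left
        have : ¬ dist (ξ i ω) 0 ≤ a := fun hle => h (Metric.mem_closedBall.mpr hle)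
        simpa [dist_zero_right] using not_le.mp this
    calc (ℙ {ω | ξ i ω ∈ Kᶜ}).toReal
        ≤ (ℙ ({ω | a < ‖ξ i ω‖} ∪ {ω | ξ i ω ∈ G})).toReal :=
          ENNReal.toReal_mono (measure_ne_top _ _) (measure_mono hsub)
      _ ≤ (ℙ {ω | a < ‖ξ i ω‖} + ℙ {ω | ξ i ω ∈ G}).toReal :=
          ENNReal.toReal_mono (by simp [ENNReal.add_ne_top, measure_ne_top]) (measure_union_le _ _)
      _ = _ := ENNReal.toReal_add (measure_ne_top _ _) (measure_ne_top _ _)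
  have b1 := bdd01 (fun i => {ω | a < ‖ξ i ω‖})
  have b2 := bdd01 (fun i => {ω | ξ i ω ∈ G})
  have b3 := bdd01 (fun i => {ω | ξ i ω ∈ Kᶜ})
  have step1 : liminf (fun i => (ℙ {ω | ξ i ω ∈ Kᶜ}).toReal) 𝓕 ≤
      liminf (fun i => (ℙ {ω | a < ‖ξ i ω‖}).toReal + (ℙ {ω | ξ i ω ∈ G}).toReal) 𝓕 :=
    liminf_le_liminf (Eventually.of_forall hpt) b3.1
      (isBoundedUnder_le_add b1.2 b2.2).isCoboundedUnder_ge
  have step2 : liminf (fun i => (ℙ {ω | a < ‖ξ i ω‖}).toReal + (ℙ {ω | ξ i ω ∈ G}).toReal) 𝓕 ≤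
      limsup (fun i => (ℙ {ω | a < ‖ξ i ω‖}).toReal) 𝓕 +
      liminf (fun i => (ℙ {ω | ξ i ω ∈ G}).toReal) 𝓕 :=
    liminf_add_le b1.1 b1.2 b2.1 b2.2.isCoboundedUnder_ge
  calc ν G ≤ ν Kᶜ := hν _ _ hGK
    _ ≤ liminf (fun i => (ℙ {ω | ξ i ω ∈ Kᶜ}).toReal) 𝓕 := hcocompact K hKcpt
    _ ≤ _ := step1
    _ ≤ _ := step2
    _ ≤ liminf (fun i => (ℙ {ω | ξ i ω ∈ G}).toReal) 𝓕 + ε := by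
        rw [add_comm]
        exact add_le_add_right ha.le _
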